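/- Let A be a (not necessarily commutative) ring and θ₁, …, θ_{ℓ+1} ∈ A. Fix a permutation σ of {1,…,ℓ+1} and an index 1 ≤ j ≤ ℓ, and define σ_j : {1,…,ℓ+1} → {1,…,ℓ} by σ_j(k) = σ(k) if σ(k) ≤ j and σ_j(k) = σ(k) − 1 if σ(k) > j. For a function ν : {1,…,ℓ+1} → {1,…,ℓ} and elements φ₁,…,φ_ℓ ∈ A write b_ν(φ₁,…,φ_ℓ) = φ_{ν(1)}·⋯·φ_{ν(ℓ+1)}. Then b_{σ_j}(θ₂,…,θ_{ℓ+1}) + Σ_{i=1}^{ℓ} (−1)^i · b_{σ_j}(θ₁,…,θ_i + θ_{i+1},…,θ_{ℓ+1}) + (−1)^{ℓ+1} · b_{σ_j}(θ₁,…,θ_ℓ) = (−1)^j · ( θ_{σ(1)}⋯θ_{σ(ℓ+1)} + θ_{τ(1)}⋯θ_{τ(ℓ+1)} ), where τ is σ composed with the transposition swapping the two positions at which σ takes the values j and j+1 (i.e. the right-hand side is the sum of the product in the order σ and the product with the values j and j+1 interchanged). -/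

import Mathlib

/-- Ordered product `φ_{ν(0)} ⋯ φ_{ν(m-1)}` (noncommutative). -/
def obprod {A : Type*} [Ring A] {m : ℕ} (φ : Fin m → A) : A := (List.ofFn φ).prod

/-- For a permutation `σ` of `Fin (ℓ+1)` (0-based model of `{1,…,ℓ+1}`) and `j < ℓ`
(0-based model of `1 ≤ j ≤ ℓ`), the map `σ_j : Fin (ℓ+1) → Fin ℓ` given by
`σ_j(k) = σ(k)` if `σ(k) ≤ j` and `σ(k) − 1` otherwise. -/
def sigmaj (ℓ : ℕ) (σ : Equiv.Perm (Fin (ℓ + 1))) (j : ℕ) (hj : j < ℓ) :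
    Fin (ℓ + 1) → Fin ℓ := fun k =>
  if h : (σ k : ℕ) ≤ j then ⟨(σ k : ℕ), by omega⟩
  else ⟨(σ k : ℕ) - 1, by have := (σ k).isLt; omega⟩

/-- The tuple `(θ₁,…,θ_i + θ_{i+1},…,θ_{ℓ+1})` obtained by merging the entries at
(0-based) positions `i` and `i+1`. -/
def mergeAt {A : Type*} [Ring A] {ℓ : ℕ} (θ : Fin (ℓ + 1) → A) (i : ℕ) : Fin ℓ → A :=
  fun m =>
    if (m : ℕ) < i then θ m.castSucc
    else if (m : ℕ) = i then θ m.castSucc + θ m.succ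
    else θ m.succ

set_option maxHeartbeats 2000000

/-- `liftskip i` embeds `Fin ℓ` into `Fin (ℓ+1)` skipping value `i`. -/
def liftskip {ℓ : ℕ} (i : ℕ) (m : Fin ℓ) : Fin (ℓ + 1) :=
  if (m : ℕ) < i then m.castSucc else m.succ

lemma liftskip_val {ℓ : ℕ} (i : ℕ) (m : Fin ℓ) :
    ((liftskip i m : Fin (ℓ + 1)) : ℕ) = if (m : ℕ) < i then (m : ℕ) else (m : ℕ) + 1 := by
  unfold liftskip; split <;> simp

lemma negpow_succ_smul {A : Type*} [Ring A] (n : ℕ) (x : A) :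
    (-1 : ℤ) ^ (n + 1) • x = -((-1 : ℤ) ^ n • x) := by
  rw [pow_succ, mul_smul, neg_one_zsmul, smul_neg]

lemma obprod_update_add {A : Type*} [Ring A] {m : ℕ} (f : Fin m → A) (k : Fin m) (a b : A) :
    obprod (Function.update f k (a + b))
      = obprod (Function.update f k a) + obprod (Function.update f k b) := by
  have h := (MultilinearMap.mkPiAlgebraFin ℤ m A).map_update_add f k a b
  simp only [MultilinearMap.mkPiAlgebraFin_apply] at h
  exact h

/-- Cancellation lemma: the simplicial alternating sum of the `b_{σ_j}`-products
(drop first entry, merge consecutive entries, drop last entry) equals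
`(−1)^j ( θ_{σ(1)}⋯θ_{σ(ℓ+1)} + θ_{τ(1)}⋯θ_{τ(ℓ+1)} )` where `τ` is `σ` with the
values `j`, `j+1` interchanged.  (All indices 0-based; the sign exponents `i+1`,
`j+1` correspond to the 1-based exponents `i`, `j` of the paper.) -/
theorem stmt9 {A : Type*} [Ring A] (ℓ : ℕ) (θ : Fin (ℓ + 1) → A)
    (σ : Equiv.Perm (Fin (ℓ + 1))) (j : ℕ) (hj : j < ℓ) :
    obprod (fun k => θ ((sigmaj ℓ σ j hj k).succ))
        + (∑ i ∈ Finset.range ℓ,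
            (-1 : ℤ) ^ (i + 1) • obprod (fun k => mergeAt θ i (sigmaj ℓ σ j hj k)))
        + (-1 : ℤ) ^ (ℓ + 1) • obprod (fun k => θ ((sigmaj ℓ σ j hj k).castSucc))
      = (-1 : ℤ) ^ (j + 1) •
          (obprod (fun k => θ (σ k))
            + obprod (fun k =>
                θ (Equiv.swap (⟨j, by omega⟩ : Fin (ℓ + 1)) ⟨j + 1, by omega⟩ (σ k)))) := by
  classical
  set ν : Fin (ℓ + 1) → Fin ℓ := sigmaj ℓ σ j hj with hν
  have hνval : ∀ k, ((ν k : Fin ℓ) : ℕ)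
      = if (σ k : ℕ) ≤ j then (σ k : ℕ) else (σ k : ℕ) - 1 := by
    intro k; simp only [hν, sigmaj]; split <;> rfl
  set jf : Fin (ℓ + 1) := ⟨j, by omega⟩ with hjf
  set jf' : Fin (ℓ + 1) := ⟨j + 1, by omega⟩ with hjf'
  set p := σ.symm jf with hp
  set q := σ.symm jf' with hq
  have hσp : σ p = jf := σ.apply_symm_apply jf
  have hσq : σ q = jf' := σ.apply_symm_apply jf'
  have hpq : p ≠ q := by
    intro h
    have : jf = jf' := by rw [← hσp, ← hσq, h]
    simp [hjf, hjf', Fin.ext_iff] at this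
  set Q : ℕ → A := fun i => obprod (fun k => θ (liftskip i (ν k))) with hQ
  set S : A := obprod (fun k => θ (σ k))
      + obprod (fun k => θ (Equiv.swap jf jf' (σ k))) with hS
  -- boundary identifications
  have hfirst : (fun k => θ ((ν k).succ)) = fun k => θ (liftskip 0 (ν k)) := by
    funext k; simp [liftskip]
  have hlast : (fun k => θ ((ν k).castSucc)) = fun k => θ (liftskip ℓ (ν k)) := by
    funext k; simp [liftskip, (ν k).isLt]
  -- key for i ≠ j
  have key1 : ∀ i, i < ℓ → i ≠ j →
      obprod (fun k => mergeAt θ i (ν k)) = Q (i + 1) + Q i := by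
    intro i hi hij
    obtain ⟨k₀, hk₀⟩ : ∃ k₀, ∀ k, ((ν k : ℕ) = i ↔ k = k₀) := by
      rcases lt_or_gt_of_ne hij with h | h
      · refine ⟨σ.symm ⟨i, by omega⟩, fun k => ?_⟩
        rw [hνval k]
        constructor
        · intro hk
          have hσk : (σ k : ℕ) = i := by split at hk <;> omega
          have : σ k = ⟨i, by omega⟩ := Fin.ext hσk
          rw [← this, Equiv.symm_apply_apply]
        · rintro rfl
          rw [Equiv.apply_symm_apply]
          simp; omega
      · refine ⟨σ.symm ⟨i + 1, by omega⟩, fun k => ?_⟩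
        rw [hνval k]
        constructor
        · intro hk
          have hσk : (σ k : ℕ) = i + 1 := by split at hk <;> omega
          have : σ k = ⟨i + 1, by omega⟩ := Fin.ext hσk
          rw [← this, Equiv.symm_apply_apply]
        · rintro rfl
          rw [Equiv.apply_symm_apply]
          simp; omega
    have hνk₀ : ((ν k₀ : Fin ℓ) : ℕ) = i := (hk₀ k₀).2 rfl
    have e1 : (fun k => mergeAt θ i (ν k))
        = Function.update (fun k => θ (liftskip (i + 1) (ν k))) k₀
            (θ ⟨i, by omega⟩ + θ ⟨i + 1, by omega⟩) := by
      funext k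
      rcases eq_or_ne k k₀ with rfl | hk
      · rw [Function.update_self]
        have hm : mergeAt θ i (ν k) = θ (ν k).castSucc + θ (ν k).succ := by
          simp [mergeAt, hνk₀]
        rw [hm]
        congr 1 <;> exact congrArg θ (Fin.ext (by simp [hνk₀]))
      · rw [Function.update_of_ne hk]
        have hνk : ((ν k : Fin ℓ) : ℕ) ≠ i := fun h => hk ((hk₀ k).1 h)
        simp only [mergeAt, liftskip]
        rcases lt_or_gt_of_ne hνk with h | h
        · rw [if_pos h, if_pos (by omega)]
        · rw [if_neg (by omega), if_neg (by omega), if_neg (by omega)]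
    have e2 : Function.update (fun k => θ (liftskip (i + 1) (ν k))) k₀
          (θ ⟨i, by omega⟩) = fun k => θ (liftskip (i + 1) (ν k)) := by
      funext k
      rcases eq_or_ne k k₀ with rfl | hk
      · rw [Function.update_self]
        exact congrArg θ (Fin.ext (by rw [liftskip_val]; simp [hνk₀]))
      · rw [Function.update_of_ne hk]
    have e3 : Function.update (fun k => θ (liftskip (i + 1) (ν k))) k₀
          (θ ⟨i + 1, by omega⟩) = fun k => θ (liftskip i (ν k)) := by
      funext k
      rcases eq_or_ne k k₀ with rfl | hk
      · rw [Function.update_self]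
        exact congrArg θ (Fin.ext (by rw [liftskip_val]; simp [hνk₀]))
      · rw [Function.update_of_ne hk]
        have hνk : ((ν k : Fin ℓ) : ℕ) ≠ i := fun h => hk ((hk₀ k).1 h)
        exact congrArg θ (Fin.ext (by rw [liftskip_val, liftskip_val]; split_ifs <;> omega))
    rw [e1, obprod_update_add, e2, e3]
  -- key for i = j
  have key2 : obprod (fun k => mergeAt θ j (ν k)) = Q (j + 1) + Q j + S := by
    have hνp : ((ν p : Fin ℓ) : ℕ) = j := by rw [hνval, hσp]; simp [hjf]
    have hνq : ((ν q : Fin ℓ) : ℕ) = j := by rw [hνval, hσq]; simp [hjf']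
    have hσnotpq : ∀ k, k ≠ p → k ≠ q → (σ k : ℕ) ≠ j ∧ (σ k : ℕ) ≠ j + 1 := by
      intro k hkp hkq
      constructor
      · intro h
        apply hkp
        have hs : σ k = jf := Fin.ext h
        rw [hp, ← hs, Equiv.symm_apply_apply]
      · intro h
        apply hkq
        have hs : σ k = jf' := Fin.ext h
        rw [hq, ← hs, Equiv.symm_apply_apply]
    have hνother : ∀ k, k ≠ p → k ≠ q → ((ν k : Fin ℓ) : ℕ) ≠ j := by
      intro k hkp hkq h
      obtain ⟨h1, h2⟩ := hσnotpq k hkp hkq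
      rw [hνval] at h; split at h <;> omega
    set g : Fin (ℓ + 1) → A := fun k => θ (liftskip (j + 1) (ν k)) with hg
    have e1 : (fun k => mergeAt θ j (ν k))
        = Function.update (Function.update g p (θ jf + θ jf')) q (θ jf + θ jf') := by
      funext k
      rcases eq_or_ne k q with rfl | hkq
      · rw [Function.update_self]
        have hm : mergeAt θ j (ν q) = θ (ν q).castSucc + θ (ν q).succ := by
          simp [mergeAt, hνq]
        rw [hm]
        congr 1 <;> exact congrArg θ (Fin.ext (by simp [hνq, hjf, hjf']))
      · rw [Function.update_of_ne hkq]
        rcases eq_or_ne k p with rfl | hkp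
        · rw [Function.update_self]
          have hm : mergeAt θ j (ν p) = θ (ν p).castSucc + θ (ν p).succ := by
            simp [mergeAt, hνp]
          rw [hm]
          congr 1 <;> exact congrArg θ (Fin.ext (by simp [hνp, hjf, hjf']))
        · rw [Function.update_of_ne hkp]
          have hνk := hνother k hkp hkq
          simp only [mergeAt, hg, liftskip]
          rcases lt_or_gt_of_ne hνk with h | h
          · rw [if_pos h, if_pos (by omega)]
          · rw [if_neg (by omega), if_neg (by omega), if_neg (by omega)]
    have comm : ∀ x : A, Function.update (Function.update g p x) q (θ jf + θ jf')
        = Function.update (Function.update g q (θ jf + θ jf')) p x := by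
      intro x; exact Function.update_comm hpq x _ g
    -- expand the two updates
    have expand : obprod (fun k => mergeAt θ j (ν k))
        = obprod (Function.update (Function.update g q (θ jf)) p (θ jf))
          + obprod (Function.update (Function.update g q (θ jf)) p (θ jf'))
          + (obprod (Function.update (Function.update g q (θ jf')) p (θ jf))
          + obprod (Function.update (Function.update g q (θ jf')) p (θ jf'))) := by
      rw [e1, obprod_update_add]
      rw [Function.update_comm hpq, Function.update_comm hpq]
      rw [obprod_update_add, obprod_update_add]
    -- identify the four terms
    have t11 : Function.update (Function.update g q (θ jf)) p (θ jf)
        = fun k => θ (liftskip (j + 1) (ν k)) := by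
      funext k
      rcases eq_or_ne k p with rfl | hkp
      · rw [Function.update_self]
        exact congrArg θ (Fin.ext (by rw [liftskip_val]; simp [hνp, hjf]))
      rcases eq_or_ne k q with rfl | hkq
      · rw [Function.update_of_ne hkp, Function.update_self]
        exact congrArg θ (Fin.ext (by rw [liftskip_val]; simp [hνq, hjf]))
      · rw [Function.update_of_ne hkp, Function.update_of_ne hkq]
    have t22 : Function.update (Function.update g q (θ jf')) p (θ jf')
        = fun k => θ (liftskip j (ν k)) := by
      funext k
      rcases eq_or_ne k p with rfl | hkp
      · rw [Function.update_self]
        exact congrArg θ (Fin.ext (by rw [liftskip_val]; simp [hνp, hjf']))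
      rcases eq_or_ne k q with rfl | hkq
      · rw [Function.update_of_ne hkp, Function.update_self]
        exact congrArg θ (Fin.ext (by rw [liftskip_val]; simp [hνq, hjf']))
      · rw [Function.update_of_ne hkp, Function.update_of_ne hkq]
        have hνk := hνother k hkp hkq
        exact congrArg θ (Fin.ext (by rw [liftskip_val, liftskip_val]; split_ifs <;> omega))
    have t12 : Function.update (Function.update g q (θ jf')) p (θ jf)
        = fun k => θ (σ k) := by
      funext k
      rcases eq_or_ne k p with rfl | hkp
      · rw [Function.update_self, hσp]
      rcases eq_or_ne k q with rfl | hkq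
      · rw [Function.update_of_ne hkp, Function.update_self, hσq]
      · rw [Function.update_of_ne hkp, Function.update_of_ne hkq]
        obtain ⟨h1, h2⟩ := hσnotpq k hkp hkq
        refine congrArg θ (Fin.ext ?_)
        rw [liftskip_val, hνval]
        split_ifs <;> omega
    have t21 : Function.update (Function.update g q (θ jf)) p (θ jf')
        = fun k => θ (Equiv.swap jf jf' (σ k)) := by
      funext k
      rcases eq_or_ne k p with rfl | hkp
      · rw [Function.update_self, hσp, Equiv.swap_apply_left]
      rcases eq_or_ne k q with rfl | hkq
      · rw [Function.update_of_ne hkp, Function.update_self, hσq, Equiv.swap_apply_right]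
      · rw [Function.update_of_ne hkp, Function.update_of_ne hkq]
        obtain ⟨h1, h2⟩ := hσnotpq k hkp hkq
        rw [Equiv.swap_apply_of_ne_of_ne (fun h => h1 (by rw [h]))
            (fun h => h2 (by rw [h]))]
        refine congrArg θ (Fin.ext ?_)
        rw [liftskip_val, hνval]
        split_ifs <;> omega
    rw [expand, t11, t22, t12, t21, hS, hQ]
    abel
  -- rewrite each summand
  have hsummand : ∀ i ∈ Finset.range ℓ,
      (-1 : ℤ) ^ (i + 1) • obprod (fun k => mergeAt θ i (ν k))
        = (((-1 : ℤ) ^ (i + 1) • Q (i + 1)) - ((-1 : ℤ) ^ i • Q i))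
          + (if i = j then (-1 : ℤ) ^ (j + 1) • S else 0) := by
    intro i hi
    rcases eq_or_ne i j with rfl | hij
    · rw [key2, if_pos rfl]
      simp only [negpow_succ_smul, smul_add]
      abel
    · rw [key1 i (Finset.mem_range.1 hi) hij, if_neg hij]
      simp only [negpow_succ_smul, smul_add]
      abel
  rw [Finset.sum_congr rfl hsummand, Finset.sum_add_distrib,
    Finset.sum_range_sub (fun i => (-1 : ℤ) ^ i • Q i),
    Finset.sum_ite_eq' (Finset.range ℓ) j fun _ => (-1 : ℤ) ^ (j + 1) • S,
    if_pos (Finset.mem_range.2 hj)]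
  rw [hfirst, hlast]
  show Q 0 + _ + (-1 : ℤ) ^ (ℓ + 1) • Q ℓ = (-1 : ℤ) ^ (j + 1) • S
  simp only [negpow_succ_smul, pow_zero, one_smul]
  abel
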